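/- arXiv:1304.1204 — 4 statements merged into one kernel-verified Lean document; each statement's English description precedes it below -/
import Mathlib

section
/- (Atkinson's factorization, coefficientwise form.) Let A be a Rota–Baxter algebra of weight θ with Rota–Baxter operator R, set R̃ := −θ·id_A − R, and fix x ∈ A. Define sequences (f_n) and (h_n) in A by f_0 = 1, f_{n+1} = R(f_n·x) and h_0 = 1, h_{n+1} = R̃(x·h_n). Then for every n ≥ 1, ∑_{i+j=n} f_i·h_j = −θ·∑_{i+j=n−1} f_i·x·h_j; equivalently, the solutions f = 1 + λR(f x) and h = 1 + λR̃(x h) in A[[λ]] satisfy f·h = 1 − λθ·f x h, i.e. 1 + λθx = f^{−1}h^{−1}. -/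
/-- Atkinson's factorization, coefficientwise form.  Let `R` be a Rota–Baxter operator of
weight `θ`, `R̃ := -θ·id - R`, and `x ∈ A`.  If `f₀ = 1`, `f_{n+1} = R(f_n x)` and
`h₀ = 1`, `h_{n+1} = R̃(x h_n)`, then for every `n ≥ 1`,
`∑_{i+j=n} f_i h_j = -θ ∑_{i+j=n-1} f_i x h_j`
(i.e. the series `f = 1 + λR(fx)`, `h = 1 + λR̃(xh)` satisfy `f h = 1 - λθ f x h`,
equivalently `1 + λθx = f⁻¹ h⁻¹`). -/
theorem atkinson_factorization {k A : Type*} [Field k] [CharZero k] [Ring A] [Algebra k A]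
    (θ : k) (R : A →ₗ[k] A)
    (hRB : ∀ x y : A, R x * R y = R (R x * y + x * R y + θ • (x * y)))
    (Rt : A →ₗ[k] A) (hRt : ∀ x : A, Rt x = -(θ • x) - R x)
    (x : A) (f h : ℕ → A)
    (hf0 : f 0 = 1) (hfS : ∀ n : ℕ, f (n + 1) = R (f n * x))
    (hh0 : h 0 = 1) (hhS : ∀ n : ℕ, h (n + 1) = Rt (x * h n)) :
    ∀ n : ℕ, 1 ≤ n →
      ∑ ij ∈ Finset.HasAntidiagonal.antidiagonal n, f ij.1 * h ij.2 =
        -(θ • ∑ ij ∈ Finset.HasAntidiagonal.antidiagonal (n - 1), f ij.1 * x * h ij.2) := by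
  have key : ∀ a b : A, R a * Rt b = -(θ • (R a * b)) - R (R a * b - a * Rt b) := by
    intro a b
    have hb : R b = -(θ • b) - Rt b := by rw [hRt b]; abel
    have harg : R a * b + a * R b + θ • (a * b) = R a * b - a * Rt b := by
      rw [hb, mul_sub, mul_neg, mul_smul_comm]; abel
    calc R a * Rt b = R a * (-(θ • b) - R b) := by rw [hRt b]
      _ = -(θ • (R a * b)) - R a * R b := by rw [mul_sub, mul_neg, mul_smul_comm]
      _ = -(θ • (R a * b)) - R (R a * b + a * R b + θ • (a * b)) := by rw [hRB a b]
      _ = -(θ • (R a * b)) - R (R a * b - a * Rt b) := by rw [harg]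
  have hstep : ∀ i j : ℕ, f (i + 1) * h (j + 1) =
      -(θ • (f (i + 1) * (x * h j))) - R (f (i + 1) * (x * h j) - f i * (x * h (j + 1))) := by
    intro i j
    have := key (f i * x) (x * h j)
    rw [← hfS i, ← hhS j, mul_assoc] at this
    exact this
  intro n hn
  obtain ⟨m, rfl⟩ : ∃ m, n = m + 1 := ⟨n - 1, by omega⟩
  rw [Finset.Nat.sum_antidiagonal_eq_sum_range_succ_mk,
    Finset.Nat.sum_antidiagonal_eq_sum_range_succ_mk, Nat.add_sub_cancel]
  match m with
  | 0 => simp [Finset.sum_range_succ, hf0, hh0, hfS, hhS, hRt]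
  | p + 1 =>
    have tcongr : ∑ k ∈ Finset.range (p + 1),
        (f (k + 1) * (x * h (p + 1 - (k + 1))) - f k * (x * h (p + 1 - k))) =
        ∑ k ∈ Finset.range (p + 1),
        (f (k + 1) * (x * h (p - k)) - f k * (x * h (p - k + 1))) := by
      refine Finset.sum_congr rfl (fun k hk => ?_)
      have hk' : k ≤ p := Nat.lt_succ_iff.mp (Finset.mem_range.mp hk)
      have e1 : p + 1 - (k + 1) = p - k := by omega
      have e2 : p + 1 - k = p - k + 1 := by omega
      rw [e1, e2]
    have tel : ∑ k ∈ Finset.range (p + 1),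
        (f (k + 1) * (x * h (p - k)) - f k * (x * h (p - k + 1))) =
        f (p + 1) * x - x * h (p + 1) := by
      rw [← tcongr, Finset.sum_range_sub (fun k => f k * (x * h (p + 1 - k))) (p + 1),
        Nat.sub_self, hh0, mul_one, hf0, one_mul, Nat.sub_zero]
    have mcongr : ∑ k ∈ Finset.range (p + 1), f (k + 1) * h (p + 2 - (k + 1)) =
        ∑ k ∈ Finset.range (p + 1),
          (-(θ • (f (k + 1) * (x * h (p - k))))
            - R (f (k + 1) * (x * h (p - k)) - f k * (x * h (p - k + 1)))) := by
      refine Finset.sum_congr rfl (fun k hk => ?_)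
      have hk' : k ≤ p := Nat.lt_succ_iff.mp (Finset.mem_range.mp hk)
      have e1 : p + 2 - (k + 1) = (p - k) + 1 := by omega
      rw [e1, hstep]
    have hmid : ∑ k ∈ Finset.range (p + 1), f (k + 1) * h (p + 2 - (k + 1)) =
        -(θ • ∑ k ∈ Finset.range (p + 1), f (k + 1) * (x * h (p - k)))
          - R (f (p + 1) * x - x * h (p + 1)) := by
      rw [mcongr, Finset.sum_sub_distrib, Finset.sum_neg_distrib, ← Finset.smul_sum,
        ← map_sum, tel]
    have hRHS : ∑ k ∈ Finset.range (p + 2), f k * x * h (p + 1 - k) =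
        (∑ k ∈ Finset.range (p + 1), f (k + 1) * (x * h (p - k))) + x * h (p + 1) := by
      rw [Finset.sum_range_succ']
      congr 1
      · refine Finset.sum_congr rfl (fun k hk => ?_)
        have hk' : k ≤ p := Nat.lt_succ_iff.mp (Finset.mem_range.mp hk)
        have e1 : p + 1 - (k + 1) = p - k := by omega
        rw [e1, mul_assoc]
      · rw [hf0, one_mul, Nat.sub_zero]
    show ∑ k ∈ Finset.range (p + 3), f k * h (p + 2 - k) =
        -(θ • ∑ k ∈ Finset.range (p + 2), f k * x * h (p + 1 - k))
    rw [Finset.sum_range_succ', Finset.sum_range_succ, hmid, hRHS]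
    rw [Nat.sub_self, hh0, mul_one, hf0, one_mul, Nat.sub_zero]
    rw [hfS (p + 1), hhS (p + 1), hRt (x * h (p + 1)), map_sub, smul_add]
    abel
end

section
/- Let A be a Rota–Baxter algebra of weight θ with Rota–Baxter operator R. Then the product a ▷_θ b := R(a)b − bR(a) − θ·ba is left pre-Lie, i.e. (a ▷_θ b) ▷_θ c − a ▷_θ (b ▷_θ c) = (b ▷_θ a) ▷_θ c − b ▷_θ (a ▷_θ c) for all a, b, c ∈ A, and its commutator bracket coincides with that of the double product: a ▷_θ b − b ▷_θ a = a *_θ b − b *_θ a for all a, b ∈ A. -/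
/-- The double product of weight `θ`: `x *_θ y := R(x)y + xR(y) + θ·xy`. -/
def doubleProd {k A : Type*} [Field k] [Ring A] [Algebra k A]
    (θ : k) (R : A →ₗ[k] A) (x y : A) : A :=
  R x * y + x * R y + θ • (x * y)

/-- The pre-Lie product of weight `θ`: `a ▷_θ b := R(a)b - bR(a) - θ·ba`. -/
def preLieProd {k A : Type*} [Field k] [Ring A] [Algebra k A]
    (θ : k) (R : A →ₗ[k] A) (a b : A) : A :=
  R a * b - b * R a - θ • (b * a)

/-- In a Rota–Baxter algebra of weight `θ`, the product `a ▷_θ b := R(a)b - bR(a) - θ·ba`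
is left pre-Lie, and its commutator bracket coincides with that of the double product. -/
theorem rotaBaxter_preLie {k A : Type*} [Field k] [CharZero k] [Ring A] [Algebra k A]
    (θ : k) (R : A →ₗ[k] A)
    (hRB : ∀ x y : A, R x * R y = R (R x * y + x * R y + θ • (x * y))) :
    (∀ a b c : A,
      preLieProd θ R (preLieProd θ R a b) c - preLieProd θ R a (preLieProd θ R b c) =
        preLieProd θ R (preLieProd θ R b a) c - preLieProd θ R b (preLieProd θ R a c)) ∧
    (∀ a b : A,
      preLieProd θ R a b - preLieProd θ R b a = doubleProd θ R a b - doubleProd θ R b a) := by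
  have hRB' : ∀ x y : A, R x * R y = R (R x * y) + R (x * R y) + θ • R (x * y) := by
    intro x y; rw [hRB]; simp [map_add, map_smul]
  have hRB2 : ∀ z x y : A, z * R x * R y =
      z * R (R x * y) + z * R (x * R y) + θ • (z * R (x * y)) := by
    intro z x y; rw [mul_assoc, hRB', mul_add, mul_add, mul_smul_comm]
  constructor
  · intro a b c
    simp only [preLieProd, map_sub, map_smul, sub_mul, mul_sub, smul_sub,
      smul_mul_assoc, mul_smul_comm, smul_smul, ← mul_assoc]
    simp only [hRB', hRB2, add_mul, mul_add, sub_mul, mul_sub, smul_add, smul_sub,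
      smul_mul_assoc, mul_smul_comm, smul_smul, ← mul_assoc]
    module
  · intro a b
    simp only [preLieProd, doubleProd]
    module
end

section
/- (Weight zero commutative Bohnenblust–Spitzer identity.) Let A be a commutative Rota–Baxter algebra of weight zero with Rota–Baxter operator R, let n ≥ 1 and F₁, …, F_n ∈ A. For a permutation σ of {1,…,n} define G_σ by G¹_σ := F_{σ(1)} and G^{k+1}_σ := R(G^k_σ)·F_{σ(k+1)}. Then ∑_{σ ∈ S_n} G^n_σ = F₁ *₀ F₂ *₀ ⋯ *₀ F_n, where *₀ is the (associative, commutative) weight-zero double product a *₀ b := R(a)b + aR(b). -/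
open Finset

section BSaux

variable {k A : Type*} [Field k] [CharZero k] [CommRing A] [Algebra k A]

/-- `bsE R [a₁,…,aₙ] = ∑ⱼ (∏_{i≠j} R aᵢ) * aⱼ`, defined recursively. -/
def bsE (R : A →ₗ[k] A) : List A → A
  | [] => 0
  | a :: l => (l.map R).prod * a + R a * bsE R l

/-- The iterated `R(⋯)·` fold starting from `h 0`. -/
def bsG (R : A →ₗ[k] A) {m : ℕ} (h : Fin (m + 1) → A) : A :=
  (List.ofFn fun i : Fin m => h i.succ).foldl (fun acc y => R acc * y) (h 0)

variable (R : A →ₗ[k] A)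

lemma bsE_R (hRB : ∀ x y : A, R x * R y = R (R x * y + x * R y))
    (a : A) (l : List A) :
    R (bsE R (a :: l)) = R a * (l.map R).prod := by
  induction l generalizing a with
  | nil => simp [bsE]
  | cons b t ih =>
      have hu : ((b :: t).map R).prod = R (bsE R (b :: t)) := by
        rw [List.map_cons, List.prod_cons, ih b]
      have : bsE R (a :: b :: t)
          = R (bsE R (b :: t)) * a + bsE R (b :: t) * R a := by
        rw [bsE, hu]; ring
      rw [this, ← hRB, hu]; ring

lemma foldl_st (hRB : ∀ x y : A, R x * R y = R (R x * y + x * R y))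
    (l : List A) (x : A) :
    l.foldl (fun acc y => R acc * y + acc * R y) x = bsE R (x :: l) := by
  induction l generalizing x with
  | nil => simp [bsE]
  | cons a t ih =>
      rw [List.foldl_cons, ih]
      show (t.map R).prod * (R x * a + x * R a) + R (R x * a + x * R a) * bsE R t
          = ((a :: t).map R).prod * x + R x * bsE R (a :: t)
      rw [← hRB, bsE, List.map_cons, List.prod_cons]
      ring

lemma bsG_succ {m : ℕ} (h : Fin (m + 2) → A) :
    bsG R h = R (bsG R (h ∘ Fin.castSucc)) * h (Fin.last (m + 1)) := by
  unfold bsG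
  rw [List.ofFn_succ' (fun i : Fin (m + 1) => h i.succ), List.concat_eq_append,
    List.foldl_concat]
  have h1 : (List.ofFn fun i : Fin m => h (Fin.castSucc i).succ)
      = List.ofFn fun i : Fin m => (h ∘ Fin.castSucc) i.succ := by
    simp only [Function.comp_apply, Fin.succ_castSucc]
  have h2 : (h ∘ Fin.castSucc) 0 = h 0 := by simp
  rw [h1, ← h2, Fin.succ_last]

/-- reindexing products over `univ.erase v` by an injection missing `v`. -/
lemma prod_comp_miss {n : ℕ} (e : Fin (n + 1) → Fin (n + 2))
    (he : Function.Injective e) (v : Fin (n + 2)) (hv : ∀ i, e i ≠ v)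
    (f : Fin (n + 2) → A) :
    ∏ i ∈ univ.erase v, f i = ∏ i : Fin (n + 1), f (e i) := by
  have himg : (univ : Finset (Fin (n + 1))).image e = univ.erase v := by
    apply Finset.eq_of_subset_of_card_le
    · intro x hx
      simp only [mem_image, mem_univ, true_and] at hx
      obtain ⟨i, rfl⟩ := hx
      exact mem_erase.2 ⟨hv i, mem_univ _⟩
    · rw [Finset.card_image_of_injective _ he, card_erase_of_mem (mem_univ _)]
      simp
  rw [← himg, Finset.prod_image (fun x _ y _ h => he h)]


lemma image_succ_erase {n : ℕ} (p : Fin (n + 1)) :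
    ((univ.erase p).image Fin.succ : Finset (Fin (n + 2))) = (univ.erase 0).erase p.succ := by
  ext x
  constructor
  · intro hx
    rcases mem_image.1 hx with ⟨i, hi, rfl⟩
    exact mem_erase.2 ⟨fun h => (mem_erase.1 hi).1 (Fin.succ_injective _ h),
      mem_erase.2 ⟨Fin.succ_ne_zero i, mem_univ _⟩⟩
  · intro hx
    rcases mem_erase.1 hx with ⟨hps, hx0⟩
    have h0 := (mem_erase.1 hx0).1
    cases x using Fin.cases with
    | zero => exact absurd rfl h0
    | succ i =>
        exact mem_image.2 ⟨i, mem_erase.2 ⟨fun h => hps (by rw [h]), mem_univ i⟩, rfl⟩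

lemma prod_erase_succ {n : ℕ} (p : Fin (n + 1)) (f : Fin (n + 2) → A) :
    ∏ i ∈ univ.erase p.succ, f i = f 0 * ∏ i ∈ univ.erase p, f i.succ := by
  rw [← Finset.mul_prod_erase (univ.erase p.succ) f
      (mem_erase.2 ⟨(Fin.succ_ne_zero p).symm, mem_univ _⟩),
    Finset.erase_right_comm, ← image_succ_erase p,
    Finset.prod_image (fun x _ y _ h => Fin.succ_injective _ h)]

lemma sum_erase_eq_bsE : ∀ (n : ℕ) (F : Fin (n + 1) → A),
    ∑ p : Fin (n + 1), (∏ i ∈ univ.erase p, R (F i)) * F p = bsE R (List.ofFn F) := by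
  intro n
  induction n with
  | zero =>
      intro F
      simp [bsE, List.ofFn_succ]
  | succ n ih =>
      intro F
      rw [Fin.sum_univ_succ]
      have h0 : (∏ i ∈ univ.erase (0 : Fin (n + 2)), R (F i))
          = ∏ i : Fin (n + 1), R (F i.succ) :=
        prod_comp_miss Fin.succ (Fin.succ_injective _) 0 Fin.succ_ne_zero _
      have hsucc : ∀ p : Fin (n + 1),
          (∏ i ∈ univ.erase p.succ, R (F i)) * F p.succ
            = R (F 0) * ((∏ i ∈ univ.erase p, R (F i.succ)) * F p.succ) := by
        intro p
        rw [prod_erase_succ p (fun i => R (F i))]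
        ring
      rw [h0, Finset.sum_congr rfl (fun p _ => hsucc p), ← Finset.mul_sum,
        ih (fun i => F i.succ),
        show (List.ofFn F) = F 0 :: List.ofFn (fun i => F i.succ) from List.ofFn_succ]
      simp [bsE, List.map_ofFn, List.prod_ofFn, Fin.prod_univ_succ]

lemma perm_sum (hRB : ∀ x y : A, R x * R y = R (R x * y + x * R y)) :
    ∀ (n : ℕ) (F : Fin (n + 1) → A),
    ∑ σ : Equiv.Perm (Fin (n + 1)), bsG R (F ∘ σ) = bsE R (List.ofFn F) := by
  intro n
  induction n with
  | zero =>
      intro F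
      have hc : ∀ σ : Equiv.Perm (Fin 1), bsG R (F ∘ σ) = F 0 := by
        intro σ
        simp [bsG, Subsingleton.elim (σ 0) 0]
      simp only [hc, Finset.sum_const, Finset.card_univ, Fintype.card_perm, Fintype.card_fin]
      simp [bsE, List.ofFn_succ]
  | succ n ih =>
      intro F
      set g : Fin (n + 2) → Fin (n + 1) → A :=
        fun p j => F (Equiv.swap 0 p j.succ) with hg
      have key : ∀ (p : Fin (n + 2)) (τ : Equiv.Perm (Fin (n + 1))),
          bsG R (F ∘ ⇑(Equiv.Perm.decomposeFin.symm (p, τ) * (Fin.revPerm : Equiv.Perm (Fin (n + 2)))))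
            = R (bsG R (g p ∘ ⇑(τ * (Fin.revPerm : Equiv.Perm (Fin (n + 1)))))) * F p := by
        intro p τ
        rw [bsG_succ]
        have h1 : (F ∘ ⇑(Equiv.Perm.decomposeFin.symm (p, τ)
              * (Fin.revPerm : Equiv.Perm (Fin (n + 2))))) ∘ Fin.castSucc
            = g p ∘ ⇑(τ * (Fin.revPerm : Equiv.Perm (Fin (n + 1)))) := by
          funext i
          simp [Equiv.Perm.mul_apply, Fin.rev_castSucc,
            Equiv.Perm.decomposeFin_symm_apply_succ, Function.comp, hg]
        have h2 : (F ∘ ⇑(Equiv.Perm.decomposeFin.symm (p, τ)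
              * (Fin.revPerm : Equiv.Perm (Fin (n + 2))))) (Fin.last (n + 1)) = F p := by
          simp [Equiv.Perm.mul_apply, Fin.rev_last, Function.comp,
            Equiv.Perm.decomposeFin_symm_apply_zero]
        rw [h1, h2]
      have hRE : ∀ p : Fin (n + 2),
          R (bsE R (List.ofFn (g p))) = ∏ i ∈ univ.erase p, R (F i) := by
        intro p
        have hinj : Function.Injective fun i : Fin (n + 1) => Equiv.swap 0 p i.succ :=
          fun i j h => Fin.succ_injective _ ((Equiv.swap 0 p).injective h)
        have hne : ∀ i : Fin (n + 1), Equiv.swap 0 p i.succ ≠ p := by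
          intro i h
          have h' := congrArg (Equiv.swap 0 p) h
          rw [Equiv.swap_apply_self, Equiv.swap_apply_right] at h'
          exact Fin.succ_ne_zero i h'
        rw [List.ofFn_succ, bsE_R R hRB, List.map_ofFn, List.prod_ofFn,
          prod_comp_miss _ hinj p hne (fun i => R (F i)), Fin.prod_univ_succ]
        rfl
      calc ∑ σ : Equiv.Perm (Fin (n + 2)), bsG R (F ∘ ⇑σ)
          = ∑ σ : Equiv.Perm (Fin (n + 2)), bsG R (F ∘ ⇑(σ * (Fin.revPerm : Equiv.Perm (Fin (n + 2))))) :=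
            (Fintype.sum_bijective (· * (Fin.revPerm : Equiv.Perm (Fin (n + 2))))
              (Group.mulRight_bijective _)
              (fun σ : Equiv.Perm (Fin (n + 2)) =>
                bsG R (F ∘ ⇑(σ * (Fin.revPerm : Equiv.Perm (Fin (n + 2))))))
              (fun σ : Equiv.Perm (Fin (n + 2)) => bsG R (F ∘ ⇑σ)) (fun σ => rfl)).symm
        _ = ∑ x : Fin (n + 2) × Equiv.Perm (Fin (n + 1)),
              bsG R (F ∘ ⇑((Equiv.Perm.decomposeFin.symm x : Equiv.Perm (Fin (n + 2)))
                * (Fin.revPerm : Equiv.Perm (Fin (n + 2))))) :=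
            (Fintype.sum_bijective Equiv.Perm.decomposeFin.symm
              Equiv.Perm.decomposeFin.symm.bijective
              (fun x : Fin (n + 2) × Equiv.Perm (Fin (n + 1)) =>
                bsG R (F ∘ ⇑((Equiv.Perm.decomposeFin.symm x : Equiv.Perm (Fin (n + 2)))
                  * (Fin.revPerm : Equiv.Perm (Fin (n + 2))))))
              (fun σ : Equiv.Perm (Fin (n + 2)) =>
                bsG R (F ∘ ⇑(σ * (Fin.revPerm : Equiv.Perm (Fin (n + 2))))))
              (fun x => rfl)).symm
        _ = ∑ p : Fin (n + 2), ∑ τ : Equiv.Perm (Fin (n + 1)),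
              R (bsG R (g p ∘ ⇑(τ * (Fin.revPerm : Equiv.Perm (Fin (n + 1)))))) * F p := by
            rw [Fintype.sum_prod_type]
            exact Finset.sum_congr rfl fun p _ =>
              Finset.sum_congr rfl fun τ _ => key p τ
        _ = ∑ p : Fin (n + 2), R (∑ τ : Equiv.Perm (Fin (n + 1)),
              bsG R (g p ∘ ⇑τ)) * F p := by
            refine Finset.sum_congr rfl fun p _ => ?_
            rw [← Finset.sum_mul, ← map_sum,
              Fintype.sum_bijective (· * (Fin.revPerm : Equiv.Perm (Fin (n + 1))))
                (Group.mulRight_bijective _)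
                (fun τ : Equiv.Perm (Fin (n + 1)) =>
                  bsG R (g p ∘ ⇑(τ * (Fin.revPerm : Equiv.Perm (Fin (n + 1))))))
                (fun τ : Equiv.Perm (Fin (n + 1)) => bsG R (g p ∘ ⇑τ)) (fun τ => rfl)]
        _ = ∑ p : Fin (n + 2), (∏ i ∈ univ.erase p, R (F i)) * F p := by
            refine Finset.sum_congr rfl fun p _ => ?_
            rw [ih (g p), hRE p]
        _ = bsE R (List.ofFn F) := sum_erase_eq_bsE R _ F

end BSaux

/-- Weight zero commutative Bohnenblust–Spitzer identity. -/
theorem bohnenblustSpitzer_weight_zero {k A : Type*} [Field k] [CharZero k]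
    [CommRing A] [Algebra k A] (R : A →ₗ[k] A)
    (hRB : ∀ x y : A, R x * R y = R (R x * y + x * R y))
    (n : ℕ) (F : Fin (n + 1) → A) :
    ∑ σ : Equiv.Perm (Fin (n + 1)),
        (List.ofFn fun i => F (σ i)).tail.foldl (fun acc y => R acc * y) (F (σ 0)) =
      (List.ofFn F).tail.foldl (fun acc y => R acc * y + acc * R y) (F 0) := by
  have hL : ∀ σ : Equiv.Perm (Fin (n + 1)),
      (List.ofFn fun i => F (σ i)).tail.foldl (fun acc y => R acc * y) (F (σ 0))
        = bsG R (F ∘ ⇑σ) := by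
    intro σ
    rw [List.ofFn_succ, List.tail_cons]
    rfl
  rw [Finset.sum_congr rfl fun σ _ => hL σ, perm_sum R hRB n F,
    List.ofFn_succ, List.tail_cons, foldl_st R hRB, ← List.ofFn_succ]
end

section
/- (Semenov-Tian-Shansky.) Let L be a Lie algebra over a field k of characteristic zero and R : L → L a k-linear map satisfying the operator form of the classical Yang–Baxter equation [R(x), R(y)] = R([R(x), y] + [x, R(y)]) for all x, y ∈ L. Then the bracket [x, y]_R := [R(x), y] + [x, R(y)] is a Lie bracket on L: it is bilinear, alternating, and satisfies the Jacobi identity. -/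
/-- (Semenov-Tian-Shansky.)  If `R : L → L` is a linear map on a Lie algebra satisfying
the operator form of the classical Yang–Baxter equation
`[R(x), R(y)] = R([R(x), y] + [x, R(y)])`, then
`[x, y]_R := [R(x), y] + [x, R(y)]` is a Lie bracket on `L`: it is bilinear,
alternating, and satisfies the Jacobi identity. -/
theorem sts_double_lie_bracket {k L : Type*} [Field k] [CharZero k]
    [LieRing L] [LieAlgebra k L] (R : L →ₗ[k] L)
    (hCYBE : ∀ x y : L, ⁅R x, R y⁆ = R (⁅R x, y⁆ + ⁅x, R y⁆)) :
    (∀ x y z : L, ⁅R (x + y), z⁆ + ⁅x + y, R z⁆ =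
        (⁅R x, z⁆ + ⁅x, R z⁆) + (⁅R y, z⁆ + ⁅y, R z⁆)) ∧
    (∀ (c : k) (x y : L), ⁅R (c • x), y⁆ + ⁅c • x, R y⁆ = c • (⁅R x, y⁆ + ⁅x, R y⁆)) ∧
    (∀ x y z : L, ⁅R x, y + z⁆ + ⁅x, R (y + z)⁆ =
        (⁅R x, y⁆ + ⁅x, R y⁆) + (⁅R x, z⁆ + ⁅x, R z⁆)) ∧
    (∀ (c : k) (x y : L), ⁅R x, c • y⁆ + ⁅x, R (c • y)⁆ = c • (⁅R x, y⁆ + ⁅x, R y⁆)) ∧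
    (∀ x : L, ⁅R x, x⁆ + ⁅x, R x⁆ = 0) ∧
    (∀ x y z : L,
      (⁅R (⁅R x, y⁆ + ⁅x, R y⁆), z⁆ + ⁅⁅R x, y⁆ + ⁅x, R y⁆, R z⁆)
        + (⁅R (⁅R y, z⁆ + ⁅y, R z⁆), x⁆ + ⁅⁅R y, z⁆ + ⁅y, R z⁆, R x⁆)
        + (⁅R (⁅R z, x⁆ + ⁅z, R x⁆), y⁆ + ⁅⁅R z, x⁆ + ⁅z, R x⁆, R y⁆) = 0) := by
  refine ⟨?_, ?_, ?_, ?_, ?_, ?_⟩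
  · intro x y z; simp only [map_add, add_lie]; abel
  · intro c x y; simp only [map_smul, smul_lie, smul_add]
  · intro x y z; simp only [map_add, lie_add]; abel
  · intro c x y; simp only [map_smul, lie_smul, smul_add]
  · intro x
    rw [← lie_skew x (R x)]
    abel
  · have j : ∀ a b c : L, ⁅⁅a, b⁆, c⁆ + ⁅⁅b, c⁆, a⁆ + ⁅⁅c, a⁆, b⁆ = 0 := by
      intro a b c
      have h1 := lie_jacobi c a b
      have h2 := lie_jacobi b a c
      simp only [lie_lie] at h1 h2 ⊢
      linear_combination (norm := abel) h1 - h2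
    intro x y z
    simp only [← hCYBE, add_lie]
    calc ⁅⁅R x, R y⁆, z⁆ + (⁅⁅R x, y⁆, R z⁆ + ⁅⁅x, R y⁆, R z⁆) +
          (⁅⁅R y, R z⁆, x⁆ + (⁅⁅R y, z⁆, R x⁆ + ⁅⁅y, R z⁆, R x⁆)) +
          (⁅⁅R z, R x⁆, y⁆ + (⁅⁅R z, x⁆, R y⁆ + ⁅⁅z, R x⁆, R y⁆))
        = (⁅⁅R x, R y⁆, z⁆ + ⁅⁅R y, z⁆, R x⁆ + ⁅⁅z, R x⁆, R y⁆)
          + (⁅⁅R x, y⁆, R z⁆ + ⁅⁅y, R z⁆, R x⁆ + ⁅⁅R z, R x⁆, y⁆)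
          + (⁅⁅x, R y⁆, R z⁆ + ⁅⁅R y, R z⁆, x⁆ + ⁅⁅R z, x⁆, R y⁆) := by abel
      _ = 0 := by rw [j, j, j]; simp
end
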